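/- A metric uncertainty relation yields a locking scheme: if {U₀,…,U_{t−1}} on A⊗B (with d_A = 2^n) satisfies an ε-metric uncertainty relation on A, then the encoding E(x,k) = (1/d_B) Σ_{b∈[d_B]} U_k† (|x⟩⟨x|^A ⊗ |b⟩⟨b|^B) U_k is ε-locking: (i) distinct messages encode to perfectly distinguishable states (trace distance 1) for the same key, and (ii) for X uniform on [2^n], K uniform on [t] independent of X, and any rank-one POVM measurement on A⊗B with outcome I, the conditional distribution of X given I = i is within total variation distance ε of uniform for every outcome i. -/

import Mathlib

open Matrix
open scoped BigOperators ComplexOrder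

/-- The positive semidefinite square root of a positive semidefinite matrix
(the definition `Matrix.PosSemidef.sqrt` of the older Mathlib, since removed). -/
noncomputable def Matrix.PosSemidef.sqrt {n 𝕜 : Type*} [Fintype n] [DecidableEq n] [RCLike 𝕜]
    {A : Matrix n n 𝕜} (hA : A.PosSemidef) : Matrix n n 𝕜 :=
  hA.1.eigenvectorUnitary.1 * diagonal ((↑) ∘ (√·) ∘ hA.1.eigenvalues) *
    (star hA.1.eigenvectorUnitary : Matrix n n 𝕜)

/-- The locking encoding `E(x,k) = (1/d_B) Σ_b U_k† (|x⟩⟨x| ⊗ |b⟩⟨b|) U_k`. -/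
noncomputable def lockEnc (dA dB t : ℕ)
    (U : Fin t → Matrix (Fin dA × Fin dB) (Fin dA × Fin dB) ℂ)
    (x : Fin dA) (k : Fin t) : Matrix (Fin dA × Fin dB) (Fin dA × Fin dB) ℂ :=
  (((dB : ℝ)⁻¹ : ℝ) : ℂ) •
    ∑ b : Fin dB, (U k)ᴴ * Matrix.single (x, b) (x, b) (1 : ℂ) * U k

/-- The joint probability `P(I = i, X = x)` of message `x` (uniform on `[d_A]`) and
outcome `i` of the rank-one POVM `{ξ_i |e_i⟩⟨e_i|}` applied to `E(X, K)` with the key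
`K` uniform on `[t]`. -/
noncomputable def lockProb (dA dB t m : ℕ)
    (U : Fin t → Matrix (Fin dA × Fin dB) (Fin dA × Fin dB) ℂ)
    (ξ : Fin m → ℝ) (e : Fin m → EuclideanSpace ℂ (Fin dA × Fin dB))
    (i : Fin m) (x : Fin dA) : ℝ :=
  (1 / ((dA : ℝ) * t)) * ∑ k,
    ((((ξ i : ℝ) : ℂ) • Matrix.vecMulVec (e i) (fun p => (starRingEnd ℂ) (e i p)) *
        lockEnc dA dB t U x k).trace).re

lemma sum_std (dA dB : ℕ) (x : Fin dA) :
    ∑ b : Fin dB, Matrix.single (x, b) (x, b) (1 : ℂ) =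
      Matrix.diagonal (fun p : Fin dA × Fin dB => if p.1 = x then (1:ℂ) else 0) := by
  ext ⟨a, b⟩ ⟨a', b'⟩
  simp only [Matrix.sum_apply, Matrix.single, Matrix.of_apply, Matrix.diagonal_apply,
    Prod.mk.injEq]
  have key : ∀ c : Fin dB, (if (x = a ∧ c = b) ∧ x = a' ∧ c = b' then (1:ℂ) else 0)
      = if c = b then (if a = a' ∧ b = b' then if a = x then (1:ℂ) else 0 else 0) else 0 := by
    intro c; by_cases h : c = b <;> aesop
  rw [Finset.sum_congr rfl fun c _ => key c, Finset.sum_ite_eq' _ b]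
  simp

lemma lockEnc_eq (dA dB t : ℕ) (U : Fin t → Matrix (Fin dA × Fin dB) (Fin dA × Fin dB) ℂ)
    (x : Fin dA) (k : Fin t) :
    lockEnc dA dB t U x k = (((dB : ℝ)⁻¹ : ℝ) : ℂ) •
      ((U k)ᴴ * Matrix.diagonal (fun p : Fin dA × Fin dB => if p.1 = x then (1:ℂ) else 0) *
        U k) := by
  unfold lockEnc
  congr 1
  rw [← Finset.sum_mul, ← Matrix.mul_sum, sum_std]

lemma conj_sq {N : Type*} [Fintype N] [DecidableEq N] (V : Matrix N N ℂ) (hVV : V * Vᴴ = 1)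
    (g : N → ℂ) :
    (Vᴴ * Matrix.diagonal g * V) ^ 2 = Vᴴ * Matrix.diagonal (fun p => g p * g p) * V := by
  rw [pow_two]
  calc Vᴴ * Matrix.diagonal g * V * (Vᴴ * Matrix.diagonal g * V)
      = Vᴴ * Matrix.diagonal g * (V * Vᴴ) * Matrix.diagonal g * V := by
        simp only [Matrix.mul_assoc]
    _ = Vᴴ * (Matrix.diagonal g * Matrix.diagonal g) * V := by
        rw [hVV]; simp only [Matrix.mul_one, Matrix.mul_assoc]
    _ = _ := by rw [Matrix.diagonal_mul_diagonal]

lemma conj_self_eq_normSq (z : ℂ) : (starRingEnd ℂ) z * z = ((‖z‖ ^ 2 : ℝ) : ℂ) := by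
  rw [mul_comm, Complex.mul_conj]
  norm_cast
  simp [← Complex.sq_norm]

lemma trace_vmv {N : Type*} [Fintype N] (v : N → ℂ) (M : Matrix N N ℂ) :
    (Matrix.vecMulVec v (fun p => (starRingEnd ℂ) (v p)) * M).trace
      = dotProduct (star v) (M.mulVec v) := by
  simp only [Matrix.trace, Matrix.diag, Matrix.mul_apply, Matrix.vecMulVec_apply,
    dotProduct, Matrix.mulVec, Pi.star_apply]
  rw [Finset.sum_comm]
  congr 1
  funext q
  rw [Finset.mul_sum]
  congr 1
  funext p
  simp only [Complex.star_def]
  ring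

lemma quad_diag {N : Type*} [Fintype N] [DecidableEq N] (d : N → ℂ) (w : N → ℂ) :
    dotProduct (star w) ((Matrix.diagonal d).mulVec w)
      = ∑ p, d p * ((‖w p‖ ^ 2 : ℝ) : ℂ) := by
  simp only [dotProduct, Matrix.mulVec_diagonal, Pi.star_apply]
  congr 1
  funext p
  rw [← conj_self_eq_normSq]
  simp only [Complex.star_def]
  ring

lemma dot_conj {N : Type*} [Fintype N] (V : Matrix N N ℂ) (D : Matrix N N ℂ) (v : N → ℂ) :
    dotProduct (star v) ((Vᴴ * D * V).mulVec v)
      = dotProduct (star (V.mulVec v)) (D.mulVec (V.mulVec v)) := by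
  rw [← Matrix.mulVec_mulVec, ← Matrix.mulVec_mulVec, Matrix.dotProduct_mulVec,
    ← Matrix.star_mulVec]

lemma norm_mulVec_one {N : Type*} [Fintype N] [DecidableEq N] (V : Matrix N N ℂ)
    (hV : Vᴴ * V = 1) (v : N → ℂ) : ∑ p, ‖V.mulVec v p‖ ^ 2 = ∑ p, ‖v p‖ ^ 2 := by
  have key : ∀ (w : N → ℂ), dotProduct (star w) w = ((∑ p, ‖w p‖ ^ 2 : ℝ) : ℂ) := by
    intro w
    simp only [dotProduct, Pi.star_apply, Complex.star_def, conj_self_eq_normSq]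
    norm_cast
  have h1 : dotProduct (star (V.mulVec v)) (V.mulVec v)
      = dotProduct (star v) v := by
    rw [Matrix.dotProduct_mulVec, Matrix.star_mulVec, Matrix.vecMul_vecMul, hV,
      Matrix.vecMul_one]
  rw [key, key] at h1
  exact_mod_cast h1

lemma sum_ind_prod (dA dB : ℕ) (x : Fin dA) (r : Fin dA × Fin dB → ℝ) :
    ∑ p : Fin dA × Fin dB, (if p.1 = x then (1:ℂ) else 0) * ((r p : ℝ) : ℂ)
      = ((∑ b, r (x, b) : ℝ) : ℂ) := by
  rw [Fintype.sum_prod_type]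
  have : ∀ a : Fin dA, ∑ b : Fin dB, (if a = x then (1:ℂ) else 0) * ((r (a,b) : ℝ) : ℂ)
      = if a = x then ((∑ b, r (a, b) : ℝ) : ℂ) else 0 := by
    intro a
    by_cases h : a = x <;> simp [h]
  rw [Finset.sum_congr rfl fun a _ => this a, Finset.sum_ite_eq' Finset.univ x]
  simp

lemma lockProb_eq (dA dB t m : ℕ)
    (U : Fin t → Matrix (Fin dA × Fin dB) (Fin dA × Fin dB) ℂ)
    (ξ : Fin m → ℝ) (e : Fin m → EuclideanSpace ℂ (Fin dA × Fin dB))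
    (i : Fin m) (x : Fin dA) :
    lockProb dA dB t m U ξ e i x
      = (ξ i * (dB : ℝ)⁻¹ / ((dA : ℝ) * t)) *
          ∑ k, ∑ b, ‖(U k).mulVec (e i) (x, b)‖ ^ 2 := by
  unfold lockProb
  have hterm : ∀ k : Fin t,
      ((((ξ i : ℝ) : ℂ) • Matrix.vecMulVec (e i) (fun p => (starRingEnd ℂ) (e i p)) *
        lockEnc dA dB t U x k).trace).re
      = ξ i * (dB : ℝ)⁻¹ * ∑ b, ‖(U k).mulVec (e i) (x, b)‖ ^ 2 := by
    intro k
    rw [lockEnc_eq, Matrix.mul_smul, Matrix.smul_mul, Matrix.trace_smul, Matrix.trace_smul,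
      trace_vmv, dot_conj, quad_diag]
    rw [sum_ind_prod dA dB x (fun p => ‖(U k).mulVec (e i) p‖ ^ 2)]
    simp only [smul_eq_mul]
    rw [← Complex.ofReal_mul, ← Complex.ofReal_mul]
    rw [Complex.ofReal_re]
    ring
  rw [Finset.sum_congr rfl fun k _ => hterm k, ← Finset.mul_sum]
  ring

set_option maxHeartbeats 1000000 in
/-- A metric uncertainty relation yields a locking scheme: if
`{U₀,…,U_{t−1}}` on `A⊗B` (with `d_A = 2^n`) satisfies an `ε`-metric uncertainty
relation on `A`, then the encoding `E(x,k) = (1/d_B) Σ_b U_k†(|x⟩⟨x|⊗|b⟩⟨b|)U_k` is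
`ε`-locking: (i) distinct messages encode, for the same key, to states at trace
distance `1`; (ii) for `X` uniform on `[2^n]`, `K` uniform on `[t]` independent of
`X`, and any rank-one POVM with outcome `I`, the conditional distribution of `X` given
`I = i` is within total variation distance `ε` of uniform, for every outcome `i` of
positive probability. -/
theorem stmt14 (n dA dB t : ℕ) (hdA : dA = 2 ^ n) (hB : 0 < dB) (ht : 0 < t)
    (ε : ℝ) (hε : 0 < ε) (hε1 : ε < 1)
    (U : Fin t → Matrix (Fin dA × Fin dB) (Fin dA × Fin dB) ℂ)
    (hU : ∀ k, U k ∈ Matrix.unitaryGroup (Fin dA × Fin dB) ℂ)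
    (hMUR : ∀ ψ : EuclideanSpace ℂ (Fin dA × Fin dB), ‖ψ‖ = 1 →
      (1 / (t : ℝ)) * ∑ k, (1 / 2) * ∑ a : Fin dA,
          |(∑ b : Fin dB, ‖(U k).mulVec ψ (a, b)‖ ^ 2) - 1 / (dA : ℝ)| ≤ ε) :
    -- (i) perfect distinguishability given the key
    (∀ x x' : Fin dA, x ≠ x' → ∀ k,
      ∀ h : ((lockEnc dA dB t U x k - lockEnc dA dB t U x' k) ^ 2).PosSemidef,
        (1 / 2 : ℂ) * h.sqrt.trace = 1) ∧
    -- (ii) locking against any rank-one POVM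
    (∀ (m : ℕ) (ξ : Fin m → ℝ) (e : Fin m → EuclideanSpace ℂ (Fin dA × Fin dB)),
      (∀ i, 0 < ξ i) → (∀ i, ‖e i‖ = 1) →
      (∑ i, ((ξ i : ℝ) : ℂ) •
          Matrix.vecMulVec (e i) (fun p => (starRingEnd ℂ) (e i p)) = 1) →
      ∀ i : Fin m, 0 < ∑ x, lockProb dA dB t m U ξ e i x →
        (1 / 2) * ∑ x : Fin dA,
            |lockProb dA dB t m U ξ e i x / (∑ x', lockProb dA dB t m U ξ e i x')
              - 1 / (dA : ℝ)| ≤ ε) := by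
  constructor
  · intro x x' hxx k h
    set V := U k with hV
    have hVV : V * Vᴴ = 1 := by
      have := (Matrix.mem_unitaryGroup_iff).mp (hU k)
      simpa [Matrix.star_eq_conjTranspose] using this
    set c : ℂ := (((dB : ℝ)⁻¹ : ℝ) : ℂ) with hc
    have hc0 : (0:ℝ) ≤ (dB:ℝ)⁻¹ := by positivity
    set f : Fin dA × Fin dB → ℂ := fun p => if p.1 = x ∨ p.1 = x' then c else 0 with hf
    set g : Fin dA × Fin dB → ℂ := fun p => if p.1 = x then c else if p.1 = x' then -c else 0
      with hg
    set S : Matrix (Fin dA × Fin dB) (Fin dA × Fin dB) ℂ := Vᴴ * Matrix.diagonal f * V with hS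
    have hSpsd : S.PosSemidef := by
      refine (Matrix.posSemidef_diagonal_iff.mpr ?_).conjTranspose_mul_mul_same V
      intro p
      simp only [hf]
      split
      · exact Complex.zero_le_real.mpr hc0
      · exact le_refl _
    have hDT : lockEnc dA dB t U x k - lockEnc dA dB t U x' k = Vᴴ * Matrix.diagonal g * V := by
      rw [lockEnc_eq, lockEnc_eq, ← smul_sub, ← Matrix.sub_mul, ← Matrix.mul_sub,
        Matrix.diagonal_sub, ← hV, ← Matrix.smul_mul, ← Matrix.mul_smul, ← Matrix.diagonal_smul]
      have hdg : ((((dB : ℝ)⁻¹ : ℝ) : ℂ) •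
          fun i : Fin dA × Fin dB => (if i.1 = x then (1:ℂ) else 0) - if i.1 = x' then 1 else 0)
          = g := by
        funext p
        simp only [Pi.smul_apply, smul_eq_mul, hg]
        rcases eq_or_ne p.1 x with h1 | h1
        · have h2 : p.1 ≠ x' := fun hh => hxx (h1 ▸ hh)
          simp [h1, h2, hxx, Ne.symm hxx, hc]
        · rcases eq_or_ne p.1 x' with h2 | h2
          · simp [h1, h2, hxx, Ne.symm hxx, hc]
          · simp [h1, h2]
      rw [hdg]
    have hgg : (fun p => g p * g p) = fun p => f p * f p := by
      funext p
      rcases eq_or_ne p.1 x with h1 | h1 <;> rcases eq_or_ne p.1 x' with h2 | h2 <;>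
        simp [hg, hf, h1, h2, Ne.symm hxx]
    have hsq : S ^ 2 = (lockEnc dA dB t U x k - lockEnc dA dB t U x' k) ^ 2 := by
      rw [hDT, hS, conj_sq V hVV, conj_sq V hVV, hgg]
    have hsqrt : S = h.sqrt := by
      have hM := h.1
      have hSsa : IsSelfAdjoint S := hSpsd.1
      have e1 : h.sqrt = hM.cfc Real.sqrt := by
        simp [Matrix.PosSemidef.sqrt, Matrix.IsHermitian.cfc, Unitary.conjStarAlgAut_apply]
      rw [e1, ← hM.cfc_eq, ← hsq, ← cfc_comp_pow Real.sqrt 2 S Real.continuous_sqrt.continuousOn hSsa]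
      conv_lhs => rw [← cfc_id' ℝ S hSsa]
      refine cfc_congr ?_
      intro r hr
      rw [hSpsd.1.spectrum_real_eq_range_eigenvalues] at hr
      obtain ⟨j, rfl⟩ := hr
      exact (Real.sqrt_sq (hSpsd.eigenvalues_nonneg j)).symm
    have htr : S.trace = 2 := by
      rw [hS, Matrix.trace_mul_cycle, hVV, Matrix.one_mul, Matrix.trace_diagonal]
      have key : ∀ p : Fin dA × Fin dB,
          f p = (if p.1 = x then c else 0) + (if p.1 = x' then c else 0) := by
        intro p
        rcases eq_or_ne p.1 x with h1 | h1 <;> rcases eq_or_ne p.1 x' with h2 | h2 <;>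
          simp [hf, h1, h2, hxx, Ne.symm hxx]
      rw [Finset.sum_congr rfl fun p _ => key p, Finset.sum_add_distrib]
      have e1 : ∀ (y : Fin dA), (∑ p : Fin dA × Fin dB, if p.1 = y then c else 0)
          = (dB : ℂ) * c := by
        intro y
        rw [Fintype.sum_prod_type_right]
        simp [Finset.sum_ite_eq', Finset.sum_const, Finset.card_univ, nsmul_eq_mul]
      rw [e1 x, e1 x', hc]
      have hdB : (dB:ℝ) ≠ 0 := Nat.cast_ne_zero.mpr hB.ne'
      push_cast
      field_simp
      ring
    rw [← hsqrt, htr]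
    norm_num
  · intro m ξ e hξ he _hPOVM i _hpos
    have hdA0 : 0 < dA := by rw [hdA]; positivity
    have htR : (0:ℝ) < t := by exact_mod_cast ht
    have hdAR : (0:ℝ) < dA := by exact_mod_cast hdA0
    have hdBR : (0:ℝ) < dB := by exact_mod_cast hB
    have hξi := hξ i
    have hSx : ∀ k : Fin t, ∑ x, ∑ b, ‖(U k).mulVec (e i) (x, b)‖ ^ 2 = 1 := by
      intro k
      have hVu : (U k)ᴴ * U k = 1 := by
        have := (Matrix.mem_unitaryGroup_iff').mp (hU k)
        simpa [Matrix.star_eq_conjTranspose] using this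
      have h1 := norm_mulVec_one (U k) hVu (e i)
      have h2 : ∑ p : Fin dA × Fin dB, ‖(e i) p‖ ^ 2 = 1 := by
        have h3 := he i
        rw [EuclideanSpace.norm_eq] at h3
        have h4 : ∑ p, ‖(e i) p‖ ^ 2 = (Real.sqrt (∑ p, ‖(e i) p‖ ^ 2))^2 := by
          rw [Real.sq_sqrt]; positivity
        rw [h4, h3]; norm_num
      rw [← h2, ← h1]
      exact (Fintype.sum_prod_type (fun p : Fin dA × Fin dB => ‖(U k).mulVec (e i) p‖ ^ 2)).symm
    have hsum : ∑ x', lockProb dA dB t m U ξ e i x'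
        = (ξ i * (dB : ℝ)⁻¹ / ((dA : ℝ) * t)) * t := by
      rw [Finset.sum_congr rfl fun x _ => lockProb_eq dA dB t m U ξ e i x, ← Finset.mul_sum,
        Finset.sum_comm, Finset.sum_congr rfl fun k _ => hSx k]
      simp
    have hratio : ∀ x, lockProb dA dB t m U ξ e i x / (∑ x', lockProb dA dB t m U ξ e i x')
        = (1/(t:ℝ)) * ∑ k, ∑ b, ‖(U k).mulVec (e i) (x, b)‖ ^ 2 := by
      intro x
      rw [hsum, lockProb_eq]
      have hC0 : ξ i * (dB : ℝ)⁻¹ / ((dA : ℝ) * t) ≠ 0 := by positivity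
      rw [mul_div_mul_left _ _ hC0]
      ring
    rw [Finset.sum_congr rfl fun x _ => by rw [hratio x]]
    have hMUR' := hMUR (e i) (he i)
    have step1 : ∀ x : Fin dA,
        |(1/(t:ℝ)) * (∑ k, ∑ b, ‖(U k).mulVec (e i) (x, b)‖ ^ 2) - 1/(dA:ℝ)|
        ≤ (1/(t:ℝ)) * ∑ k, |(∑ b, ‖(U k).mulVec (e i) (x, b)‖ ^ 2) - 1/(dA:ℝ)| := by
      intro x
      have hrw : (1/(t:ℝ)) * (∑ k, ∑ b, ‖(U k).mulVec (e i) (x, b)‖ ^ 2) - 1/(dA:ℝ)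
          = (1/(t:ℝ)) * ∑ k, ((∑ b, ‖(U k).mulVec (e i) (x, b)‖ ^ 2) - 1/(dA:ℝ)) := by
        rw [Finset.sum_sub_distrib, Finset.sum_const, Finset.card_univ, Fintype.card_fin,
          mul_sub]
        congr 1
        rw [nsmul_eq_mul]
        field_simp
      rw [hrw, abs_mul, abs_of_nonneg (by positivity : (0:ℝ) ≤ 1/(t:ℝ))]
      exact mul_le_mul_of_nonneg_left (Finset.abs_sum_le_sum_abs _ _) (by positivity)
    calc (1/2:ℝ) * ∑ x : Fin dA,
          |(1/(t:ℝ)) * (∑ k, ∑ b, ‖(U k).mulVec (e i) (x, b)‖ ^ 2) - 1/(dA:ℝ)|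
        ≤ (1/2:ℝ) * ∑ x : Fin dA,
            (1/(t:ℝ)) * ∑ k, |(∑ b, ‖(U k).mulVec (e i) (x, b)‖ ^ 2) - 1/(dA:ℝ)| := by
          exact mul_le_mul_of_nonneg_left (Finset.sum_le_sum fun x _ => step1 x) (by norm_num)
      _ = (1/(t:ℝ)) * ∑ k, (1/2:ℝ) *
            ∑ a : Fin dA, |(∑ b, ‖(U k).mulVec (e i) (a, b)‖ ^ 2) - 1/(dA:ℝ)| := by
          simp only [Finset.mul_sum]
          rw [Finset.sum_comm]
          refine Finset.sum_congr rfl fun k _ => Finset.sum_congr rfl fun a _ => by ring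
      _ ≤ ε := hMUR'
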